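/- Let F_{3,3} : ℝ^6 → ℝ^6 be given by F_{3,3}(x,y,u1,u2,u3,u4) = (x³+y³+u1·x+u2·y+u3·x²+u4·y², x·y, u1, u2, u3, u4). Then for every point q = (x,y,u1,u2,u3,u4) ∈ ℝ^6, the derivative of F_{3,3} at q applied to ξ_4(q) = ((1/3)xy, −(1/3)y²−(1/9)u4·y, −(5/3)u3·xy, x³+y³+u1·x+u2·y+u3·x²+u4·y²+(1/9)u2·u4, −2xy, −(2/3)u2+(2/9)u4²) equals η_4(F_{3,3}(q)), where η_4(X,Y,U1,U2,U3,U4) = ((4/3)U1·Y, −(1/9)U4·Y, −(5/3)U3·Y, X+(1/9)U2·U4, −2Y, −(2/3)U2+(2/9)U4²). In particular η_4 is liftable over F_{3,3}. -/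

import Mathlib

/-- The stable map `F₃₃` of discrete algebra type `B_{3,3}`. -/
noncomputable def F33 : ℝ × ℝ × ℝ × ℝ × ℝ × ℝ → ℝ × ℝ × ℝ × ℝ × ℝ × ℝ :=
  fun (x, y, u1, u2, u3, u4) =>
    (x^3 + y^3 + u1*x + u2*y + u3*x^2 + u4*y^2, x*y, u1, u2, u3, u4)

/-- The vector field `η₄` on the target of `F₃₃`. -/
noncomputable def eta4 : ℝ × ℝ × ℝ × ℝ × ℝ × ℝ → ℝ × ℝ × ℝ × ℝ × ℝ × ℝ :=
  fun (X, Y, U1, U2, U3, U4) =>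
    ((4/3)*U1*Y, -(1/9)*U4*Y, -(5/3)*U3*Y, X + (1/9)*U2*U4,
     -2*Y, -(2/3)*U2 + (2/9)*U4^2)

/-- The lowerable vector field `ξ₄` on the source of `F₃₃`. -/
noncomputable def xi4 : ℝ × ℝ × ℝ × ℝ × ℝ × ℝ → ℝ × ℝ × ℝ × ℝ × ℝ × ℝ :=
  fun (x, y, u1, u2, u3, u4) =>
    ((1/3)*x*y, -(1/3)*y^2 - (1/9)*u4*y, -(5/3)*u3*x*y,
     x^3 + y^3 + u1*x + u2*y + u3*x^2 + u4*y^2 + (1/9)*u2*u4,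
     -2*x*y, -(2/3)*u2 + (2/9)*u4^2)

abbrev E := ℝ × ℝ × ℝ × ℝ × ℝ × ℝ

lemma F33_eq : F33 = fun q : E =>
    (q.1*q.1*q.1 + q.2.1*q.2.1*q.2.1 + q.2.2.1*q.1 + q.2.2.2.1*q.2.1 + q.2.2.2.2.1*(q.1*q.1)
      + q.2.2.2.2.2*(q.2.1*q.2.1), q.1*q.2.1, q.2.2.1, q.2.2.2.1, q.2.2.2.2.1, q.2.2.2.2.2) := by
  funext q; obtain ⟨x,y,u1,u2,u3,u4⟩ := q
  show (_,_,_,_,_,_) = (_,_,_,_,_,_)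
  norm_num [F33]; ring


set_option maxHeartbeats 2000000 in
open ContinuousLinearMap in
/-- `η₄` is liftable over `F₃₃` via `ξ₄`:
for every `q`, `d(F₃₃)_q (ξ₄ q) = η₄ (F₃₃ q)`. -/
theorem eta4_liftable_over_F33 :
    ∀ q : ℝ × ℝ × ℝ × ℝ × ℝ × ℝ, fderiv ℝ F33 q (xi4 q) = eta4 (F33 q) := by
  intro q
  rw [F33_eq]
  have h1 : HasFDerivAt (fun p : E => p.1)
      (fst ℝ ℝ (ℝ × ℝ × ℝ × ℝ × ℝ)) q := hasFDerivAt_fst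
  have h2 : HasFDerivAt (fun p : E => p.2.1)
      ((fst ℝ ℝ (ℝ × ℝ × ℝ × ℝ)).comp (snd ℝ ℝ _)) q :=
    ((fst ℝ ℝ (ℝ × ℝ × ℝ × ℝ)).comp (snd ℝ ℝ _)).hasFDerivAt
  have h3 : HasFDerivAt (fun p : E => p.2.2.1)
      ((fst ℝ ℝ (ℝ × ℝ × ℝ)).comp ((snd ℝ ℝ _).comp (snd ℝ ℝ _))) q :=
    ((fst ℝ ℝ (ℝ × ℝ × ℝ)).comp ((snd ℝ ℝ _).comp (snd ℝ ℝ _))).hasFDerivAt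
  have h4 : HasFDerivAt (fun p : E => p.2.2.2.1)
      ((fst ℝ ℝ (ℝ × ℝ)).comp ((snd ℝ ℝ _).comp ((snd ℝ ℝ _).comp (snd ℝ ℝ _)))) q :=
    ((fst ℝ ℝ (ℝ × ℝ)).comp ((snd ℝ ℝ _).comp ((snd ℝ ℝ _).comp (snd ℝ ℝ _)))).hasFDerivAt
  have h5 : HasFDerivAt (fun p : E => p.2.2.2.2.1)
      ((fst ℝ ℝ ℝ).comp ((snd ℝ ℝ _).comp ((snd ℝ ℝ _).comp ((snd ℝ ℝ _).comp (snd ℝ ℝ _))))) q :=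
    ((fst ℝ ℝ ℝ).comp ((snd ℝ ℝ _).comp ((snd ℝ ℝ _).comp ((snd ℝ ℝ _).comp (snd ℝ ℝ _))))).hasFDerivAt
  have h6 : HasFDerivAt (fun p : E => p.2.2.2.2.2)
      ((snd ℝ ℝ ℝ).comp ((snd ℝ ℝ (ℝ×ℝ)).comp ((snd ℝ ℝ _).comp ((snd ℝ ℝ _).comp (snd ℝ ℝ _))))) q :=
    ((snd ℝ ℝ ℝ).comp ((snd ℝ ℝ (ℝ×ℝ)).comp ((snd ℝ ℝ _).comp ((snd ℝ ℝ _).comp (snd ℝ ℝ _))))).hasFDerivAt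
  have hf1 : HasFDerivAt (fun p : E => p.1*p.1*p.1 + p.2.1*p.2.1*p.2.1 + p.2.2.1*p.1 + p.2.2.2.1*p.2.1
      + p.2.2.2.2.1*(p.1*p.1) + p.2.2.2.2.2*(p.2.1*p.2.1)) _ q :=
    ((((((h1.mul h1).mul h1).add ((h2.mul h2).mul h2)).add (h3.mul h1)).add (h4.mul h2)).add
      (h5.mul (h1.mul h1))).add (h6.mul (h2.mul h2))
  have hF := HasFDerivAt.prodMk hf1 (HasFDerivAt.prodMk (show HasFDerivAt (fun p : E => p.1 * p.2.1) _ q from h1.mul h2) (HasFDerivAt.prodMk h3 (HasFDerivAt.prodMk h4 (HasFDerivAt.prodMk h5 h6))))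
  rw [hF.fderiv]
  obtain ⟨x, y, u1, u2, u3, u4⟩ := q
  show (_,_,_,_,_,_) = (_,_,_,_,_,_)
  simp [xi4, eta4]
  refine ⟨by ring, by ring, by ring, by ring, by ring⟩
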